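/- Let a, b, c, d ∈ ℂ with ad − bc ≠ 0 and b ≠ 0, and let φ(z) = (az+b)/(cz+d) be a selfmap of 𝔻 (so in particular |b| < |d|, hence −conj(b)·z + conj(d) ≠ 0 for z ∈ 𝔻). Let σ(z) = (conj(a)·z − conj(c))/(−conj(b)·z + conj(d)) and assume σ maps 𝔻 into 𝔻. Suppose there exists a sequence (q_n)_{n≥0} of complex numbers with ∑_n |q_n|² < ∞ such that the function q(z) = ∑_{n=0}^∞ q_n·zⁿ (which converges for |z| < 1) satisfies q(σ(z)) = −conj(b)·z + conj(d) for all z ∈ 𝔻. Then |b| < |a|; in particular, the zero −b/a of φ lies in 𝔻. -/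

import Mathlib

open ComplexConjugate

private lemma memBall1 (w : ℂ) : w ∈ Metric.ball (0:ℂ) 1 ↔ ‖w‖ < 1 := by
  simp [Metric.mem_ball, Complex.dist_eq]

private lemma hasSeriesAux (c : ℕ → ℂ) (M : ℝ) (hM : ∀ n, ‖c n‖ ≤ M) :
    HasFPowerSeriesOnBall (fun w : ℂ => ∑' n : ℕ, c n * w ^ n)
      (FormalMultilinearSeries.ofScalars ℂ c) 0 1 := by
  have hrad : (1 : ENNReal) ≤ (FormalMultilinearSeries.ofScalars ℂ c).radius := by
    have := FormalMultilinearSeries.le_radius_of_bound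
      (FormalMultilinearSeries.ofScalars ℂ c) M (r := 1) (fun n => by
        simp only [FormalMultilinearSeries.ofScalars_norm, NNReal.coe_one, one_pow, mul_one]
        exact hM n)
    simpa using this
  have h0 : (0:ENNReal) < 1 := by norm_num
  have hball := ((FormalMultilinearSeries.ofScalars ℂ c).hasFPowerSeriesOnBall
    (lt_of_lt_of_le h0 hrad)).mono h0 hrad
  have hsum : (FormalMultilinearSeries.ofScalars ℂ c).sum = fun w : ℂ => ∑' n : ℕ, c n * w ^ n := by
    funext w
    rw [show (FormalMultilinearSeries.ofScalars ℂ c).sum w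
        = FormalMultilinearSeries.ofScalarsSum c w from rfl,
      FormalMultilinearSeries.ofScalars_sum_eq]
    simp [smul_eq_mul]
  rwa [hsum] at hball

theorem zero_in_disk_of_one_in_range (a b c d : ℂ)
    (hdet : a * d - b * c ≠ 0) (hb : b ≠ 0)
    (hself : ∀ z : ℂ, ‖z‖ < 1 →
      c * z + d ≠ 0 ∧ ‖(a * z + b) / (c * z + d)‖ < 1)
    (hσself : ∀ z : ℂ, ‖z‖ < 1 →
      -conj b * z + conj d ≠ 0 ∧
      ‖(conj a * z - conj c) / (-conj b * z + conj d)‖ < 1)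
    (q : ℕ → ℂ) (hq : Summable fun n => (‖q n‖) ^ 2)
    (heq : ∀ z : ℂ, ‖z‖ < 1 →
      (∑' n : ℕ, q n * ((conj a * z - conj c) / (-conj b * z + conj d)) ^ n) =
        -conj b * z + conj d) :
    ‖b‖ < ‖a‖ ∧ ‖-b / a‖ < 1 := by
  set A := conj a with hAdef
  set B := conj b with hBdef
  set C := conj c with hCdef
  set D := conj d with hDdef
  have hΔ : A * D - B * C ≠ 0 := by
    rw [hAdef, hBdef, hCdef, hDdef]
    intro h
    apply hdet
    have h2 := congrArg conj h
    simpa using h2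
  have hD0 : D ≠ 0 := by
    have := (hσself 0 (by simp)).1
    simpa using this
  have hB0 : B ≠ 0 := by
    rw [hBdef]
    simpa using hb
  have hw0 : ‖-C / D‖ < 1 := by
    have := (hσself 0 (by simp)).2
    simpa using this
  -- the H² function f and its power series
  have hq0 : Filter.Tendsto (fun n => (‖q n‖) ^ 2) Filter.atTop (nhds 0) :=
    hq.tendsto_atTop_zero
  obtain ⟨M, hM⟩ : ∃ M : ℝ, ∀ n, ‖q n‖ ≤ M := by
    obtain ⟨M, hM⟩ := hq0.bddAbove_range
    refine ⟨max 1 M, fun n => ?_⟩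
    have h2 : (‖q n‖) ^ 2 ≤ M := hM ⟨n, rfl⟩
    rcases le_or_gt (‖q n‖) 1 with h | h
    · exact h.trans (le_max_left _ _)
    · have : ‖q n‖ ≤ (‖q n‖) ^ 2 := by nlinarith
      exact le_max_of_le_right (this.trans h2)
  have hf := hasSeriesAux q M hM
  set f : ℂ → ℂ := fun w => ∑' n : ℕ, q n * w ^ n with hfdef
  have heq' : ∀ z : ℂ, ‖z‖ < 1 →
      f ((A * z - C) / (-B * z + D)) * (B * ((A * z - C) / (-B * z + D)) + A)
        = A * D - B * C := by
    intro z hz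
    have hden := (hσself z hz).1
    have h1 : f ((A * z - C) / (-B * z + D)) = -B * z + D := heq z hz
    rw [h1]
    have e1 : (A * z - C) / (-B * z + D) * (-B * z + D) = A * z - C :=
      div_mul_cancel₀ _ hden
    linear_combination B * e1
  -- the eventual identity near w₀ = -C/D
  have hBA : B * (-C / D) + A ≠ 0 := by
    have hrepr : B * (-C / D) + A = (A * D - B * C) / D := by
      field_simp [hD0]
      ring
    rw [hrepr]
    exact div_ne_zero hΔ hD0
  have hgcont : Filter.Tendsto (fun w : ℂ => (D * w + C) / (B * w + A))
      (nhds (-C / D)) (nhds 0) := by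
    have hcont : ContinuousAt (fun w : ℂ => (D * w + C) / (B * w + A)) (-C / D) := by
      apply ContinuousAt.div
      · fun_prop
      · fun_prop
      · exact hBA
    have hval : (D * (-C / D) + C) / (B * (-C / D) + A) = 0 := by
      have : D * (-C / D) + C = 0 := by
        field_simp [hD0]
        ring
      rw [this, zero_div]
    simpa [hval] using hcont.tendsto
  have hev : ∀ᶠ w in nhds (-C / D), f w * (B * w + A) = A * D - B * C := by
    have h1 : ∀ᶠ w in nhds (-C / D),
        ‖(D * w + C) / (B * w + A)‖ < 1 := by
      have habs : Filter.Tendsto (fun w : ℂ => ‖(D * w + C) / (B * w + A)‖)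
          (nhds (-C / D)) (nhds 0) := by
        have h := (continuous_norm.tendsto (0:ℂ)).comp hgcont
        rw [norm_zero] at h
        exact h
      exact habs.eventually_lt_const one_pos
    have h2 : ∀ᶠ w in nhds (-C / D), B * w + A ≠ 0 := by
      have hcont2 : Filter.Tendsto (fun w : ℂ => B * w + A) (nhds (-C / D))
          (nhds (B * (-C / D) + A)) := by
        exact (Continuous.tendsto (by fun_prop) _)
      exact hcont2.eventually_ne hBA
    filter_upwards [h1, h2] with w hw1 hw2
    set z := (D * w + C) / (B * w + A) with hzdef
    have hz1 : ‖z‖ < 1 := hw1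
    have hden := (hσself z hz1).1
    have key : A * z - C = w * (-B * z + D) := by
      have e : z * (B * w + A) = D * w + C := by rw [hzdef]; exact div_mul_cancel₀ _ hw2
      linear_combination e
    have hσz : (A * z - C) / (-B * z + D) = w := by
      rw [div_eq_iff hden]
      exact key
    have := heq' z hz1
    rwa [hσz] at this
  -- identity theorem on the unit ball
  have hball_eq : Metric.eball (0:ℂ) 1 = Metric.ball (0:ℂ) 1 := by
    rw [show (1:ENNReal) = ((1:NNReal) : ENNReal) from rfl, Metric.emetric_ball_nnreal]
    norm_num
  have hfa : AnalyticOnNhd ℂ f (Metric.ball (0:ℂ) 1) := by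
    rw [← hball_eq]
    exact hf.analyticOnNhd
  have hGa : AnalyticOnNhd ℂ (fun w => f w * (B * w + A)) (Metric.ball (0:ℂ) 1) :=
    fun w hw => (hfa w hw).mul ((analyticAt_const.mul analyticAt_id).add analyticAt_const)
  have hconstA : AnalyticOnNhd ℂ (fun _ : ℂ => A * D - B * C) (Metric.ball (0:ℂ) 1) :=
    fun _ _ => analyticAt_const
  have hEqOn : Set.EqOn (fun w => f w * (B * w + A)) (fun _ => A * D - B * C)
      (Metric.ball (0:ℂ) 1) :=
    hGa.eqOn_of_preconnected_of_eventuallyEq hconstA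
      (convex_ball (0:ℂ) 1).isPreconnected ((memBall1 _).mpr hw0) hev
  have hmain : ∀ w : ℂ, ‖w‖ < 1 → f w * (B * w + A) = A * D - B * C :=
    fun w hw => hEqOn ((memBall1 w).mpr hw)
  have hA0 : A ≠ 0 := by
    intro h
    apply hΔ
    have h0 := hmain 0 (by simp)
    rw [h] at h0
    rw [h]
    linear_combination -h0
  have ha0 : a ≠ 0 := by
    intro h
    exact hA0 (by rw [hAdef, h]; simp)
  have habsA : ‖A‖ = ‖a‖ := by rw [hAdef]; exact Complex.norm_conj a
  have habsB : ‖B‖ = ‖b‖ := by rw [hBdef]; exact Complex.norm_conj b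
  -- main inequality
  have hlt : ‖b‖ < ‖a‖ := by
    by_contra hcon
    push_neg at hcon  -- |a| ≤ |b|
    rcases eq_or_lt_of_le hcon with hEqAbs | hltAbs
    · -- |a| = |b| : geometric series argument
      set r : ℕ → ℂ := fun n => ((A * D - B * C) / A) * (-B / A) ^ n with hrdef
      have hAabs : 0 < ‖a‖ := norm_pos_iff.mpr ha0
      have habs1 : ‖-B / A‖ = 1 := by
        rw [norm_div, norm_neg, habsA, habsB, ← hEqAbs]
        exact div_self hAabs.ne'
      have hrabs : ∀ n, ‖r n‖ = ‖(A * D - B * C) / A‖ := by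
        intro n
        rw [hrdef]
        simp only [norm_mul, norm_pow, habs1, one_pow, mul_one]
      have hg := hasSeriesAux r (‖(A * D - B * C) / A‖) (fun n => (hrabs n).le)
      have hBAne : ∀ w : ℂ, ‖w‖ < 1 → B * w + A ≠ 0 := by
        intro w hw h0
        have := hmain w hw
        rw [h0, mul_zero] at this
        exact hΔ this.symm
      have hfg : ∀ w : ℂ, ‖w‖ < 1 → (∑' n : ℕ, r n * w ^ n) = f w := by
        intro w hw
        have hne := hBAne w hw
        have hx : ‖(-B / A) * w‖ < 1 := by
          rw [norm_mul]
          calc ‖(-B / A)‖ * ‖w‖ = ‖w‖ := by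
                rw [show ‖(-B / A)‖ = ‖-B / A‖ from rfl, habs1, one_mul]
            _ < 1 := hw
        have hrw : (1 : ℂ) - (-B / A) * w = (B * w + A) / A := by
          field_simp [hA0]
          ring
        calc (∑' n : ℕ, r n * w ^ n)
            = ((A * D - B * C) / A) * ∑' n : ℕ, ((-B / A) * w) ^ n := by
              rw [← tsum_mul_left]
              congr 1
              funext n
              rw [hrdef, mul_pow]
              ring
          _ = ((A * D - B * C) / A) * (1 - (-B / A) * w)⁻¹ := by
              rw [tsum_geometric_of_norm_lt_one hx]
          _ = (A * D - B * C) / (B * w + A) := by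
              rw [hrw]
              field_simp
          _ = f w := (div_eq_iff hne).mpr (hmain w hw).symm
      have hfAt : HasFPowerSeriesAt f (FormalMultilinearSeries.ofScalars ℂ q) 0 :=
        hf.hasFPowerSeriesAt
      have hgAt : HasFPowerSeriesAt f (FormalMultilinearSeries.ofScalars ℂ r) 0 := by
        apply hg.hasFPowerSeriesAt.congr
        filter_upwards [Metric.ball_mem_nhds (0:ℂ) one_pos] with w hw
        exact hfg w ((memBall1 w).mp hw)
      have hps := hfAt.eq_formalMultilinearSeries hgAt
      have hqr : q = r := (FormalMultilinearSeries.ofScalars_series_eq_iff ℂ q r).mp hps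
      have hlim : Filter.Tendsto (fun _ : ℕ => (‖(A * D - B * C) / A‖) ^ 2)
          Filter.atTop (nhds 0) := by
        have := hq0
        rw [hqr] at this
        simpa [hrabs] using this
      have hzero : (‖(A * D - B * C) / A‖) ^ 2 = 0 :=
        tendsto_nhds_unique tendsto_const_nhds hlim
      have : (A * D - B * C) / A = 0 := by
        have := pow_eq_zero_iff (n := 2) (by norm_num) |>.mp hzero
        exact norm_eq_zero.mp this
      exact hΔ ((div_eq_zero_iff.mp this).resolve_right hA0)
    · -- |a| < |b| : the zero of B w + A lies in the disk
      have hwstar : ‖-A / B‖ < 1 := by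
        rw [norm_div, norm_neg, habsA, habsB]
        exact (div_lt_one (lt_of_le_of_lt (norm_nonneg a) hltAbs)).mpr hltAbs
      have h0 := hmain (-A / B) hwstar
      have : B * (-A / B) + A = 0 := by
        field_simp [hB0]
        ring
      rw [this, mul_zero] at h0
      exact hΔ h0.symm
  refine ⟨hlt, ?_⟩
  rw [norm_div, norm_neg]
  exact (div_lt_one (lt_of_le_of_lt (norm_nonneg b) hlt)).mpr hlt
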